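/- Let h ∈ ℝ^d, W_T ∈ ℝ^{d'×d}, b_T ∈ ℝ^{d'}, W_C ∈ ℝ^{d'×k}, let g ∈ ℝ^k and η ∈ ℝ, and define the gradient-step increments Δb_T = η W_C g and ΔW_C = η (W_T h + b_T) g^⊤. If W_C^⊤ W_C = I_k (the k×k identity matrix) and b_T is orthogonal to W_T h + b_T (i.e. (W_T h + b_T)^⊤ b_T = 0), then the induced first-order change of the composite bias b_{C'} = W_C^⊤ b_T satisfies W_C^⊤ Δb_T + (ΔW_C)^⊤ b_T = η g, which coincides with the gradient update η ∇_{C'} L of the bias of a single linear classifier. -/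
import Mathlib


open Matrix

/-- With `Δb_T = η W_C g` and `ΔW_C = η (W_T h + b_T) gᵀ`, if `W_Cᵀ W_C = I_k` and
`b_T ⟂ (W_T h + b_T)`, then the induced first-order change of the composite bias
satisfies `W_Cᵀ Δb_T + (ΔW_C)ᵀ b_T = η g`. -/
theorem stmt_11 (d d' k : ℕ) (hd : 0 < d) (hd' : 0 < d') (hk : 0 < k)
    (h : Fin d → ℝ) (WT : Matrix (Fin d') (Fin d) ℝ) (bT : Fin d' → ℝ)
    (WC : Matrix (Fin d') (Fin k) ℝ) (g : Fin k → ℝ) (η : ℝ)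
    (ΔbT : Fin d' → ℝ) (hΔbT : ΔbT = η • WC.mulVec g)
    (ΔWC : Matrix (Fin d') (Fin k) ℝ)
    (hΔWC : ΔWC = η • Matrix.vecMulVec (WT.mulVec h + bT) g)
    (horthonormal : WCᵀ * WC = 1)
    (horth : (WT.mulVec h + bT) ⬝ᵥ bT = 0) :
    WCᵀ.mulVec ΔbT + ΔWCᵀ.mulVec bT = η • g := by
  subst hΔbT hΔWC
  rw [mulVec_smul, mulVec_mulVec, horthonormal, one_mulVec]
  have : (vecMulVec (WT.mulVec h + bT) g)ᵀ.mulVec bT = 0 := by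
    ext j
    have := horth
    simp only [dotProduct] at this
    simp only [mulVec, dotProduct, transpose_apply, vecMulVec_apply, Pi.zero_apply]
    calc (∑ i, (WT *ᵥ h + bT) i * g j * bT i)
        = g j * ∑ i, (WT *ᵥ h + bT) i * bT i := by
          rw [Finset.mul_sum]; congr 1; ext i; ring
      _ = 0 := by rw [this, mul_zero]
  rw [transpose_smul, smul_mulVec, this, smul_zero, add_zero]
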